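/- Let F be an algebraically closed field of characteristic ≠ 2, 3. For a Type III grading Γ by an abelian group G on the cyclic composition algebra (V, L, ρ, *, Q) of rank 8 with V_e ≠ 0, the identity component V_e is an F-subalgebra of (V, *) on which Q takes values in F·1, and (V_e, *, Q|_{V_e}) is a symmetric composition algebra over F; hence dim_F V_e ∈ {1, 2, 4, 8}. -/

import Mathlib

/-- A cyclic composition algebra over `(L, ρ)`: a module `V` over `L` (the scalar
action recorded as `smul`) with an `L`-valued nonsingular quadratic form `Q`
(with polar form `bQ`) and an `F`-bilinear product `mul` which is `ρ`-semilinear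
in the first variable and `ρ²`-semilinear in the second, satisfying
`Q(x*y) = ρ(Q x) ρ²(Q y)` and `b_Q(x*y,z) = ρ(b_Q(y*z,x)) = ρ²(b_Q(z*x,y))`. -/
structure CyclicComp (F : Type*) [Field F] (L : Type*) [CommRing L] [Algebra F L]
    (V : Type*) [AddCommGroup V] where
  ρ : L ≃ₐ[F] L
  rho_cube : ∀ ℓ : L, ρ (ρ (ρ ℓ)) = ℓ
  smul : L → V → V
  smul_add : ∀ (ℓ : L) (x y : V), smul ℓ (x + y) = smul ℓ x + smul ℓ y
  add_smul : ∀ (ℓ m : L) (x : V), smul (ℓ + m) x = smul ℓ x + smul m x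
  mul_smul : ∀ (ℓ m : L) (x : V), smul (ℓ * m) x = smul ℓ (smul m x)
  one_smul : ∀ x : V, smul 1 x = x
  mul : V → V → V
  mul_add_left : ∀ x y z : V, mul (x + y) z = mul x z + mul y z
  mul_add_right : ∀ x y z : V, mul x (y + z) = mul x y + mul x z
  mul_smul_left : ∀ (ℓ : L) (x y : V), mul (smul ℓ x) y = smul (ρ ℓ) (mul x y)
  mul_smul_right : ∀ (ℓ : L) (x y : V), mul x (smul ℓ y) = smul (ρ (ρ ℓ)) (mul x y)
  Q : V → L
  bQ : V → V → L
  bQ_def : ∀ x y : V, bQ x y = Q (x + y) - Q x - Q y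
  Q_smul : ∀ (ℓ : L) (x : V), Q (smul ℓ x) = ℓ ^ 2 * Q x
  bQ_smul_left : ∀ (ℓ : L) (x y : V), bQ (smul ℓ x) y = ℓ * bQ x y
  nondeg : ∀ x : V, (∀ y : V, bQ x y = 0) → x = 0
  comp : ∀ x y : V, Q (mul x y) = ρ (Q x) * ρ (ρ (Q y))
  assoc1 : ∀ x y z : V, bQ (mul x y) z = ρ (bQ (mul y z) x)
  assoc2 : ∀ x y z : V, bQ (mul x y) z = ρ (ρ (bQ (mul z x) y))

/-- The cyclic shift automorphism `ρ(ℓ₁,ℓ₂,ℓ₃) = (ℓ₂,ℓ₃,ℓ₁)` of `L = F×F×F`. -/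
def cyclicShift (F : Type*) [Field F] : (F × F × F) ≃ₐ[F] (F × F × F) where
  toFun p := (p.2.1, p.2.2, p.1)
  invFun p := (p.2.2, p.1, p.2.1)
  left_inv _ := rfl
  right_inv _ := rfl
  map_mul' _ _ := rfl
  map_add' _ _ := rfl
  commutes' _ := rfl



open Module

/-- triangular numbers -/
def triNum : ℕ → ℕ
  | 0 => 0
  | (k+1) => triNum k + (k+1)

section ListProd
variable {R : Type*} [Ring R] {ι : Type*} [DecidableEq ι] (A : ι → R)

lemma mul_listProd (a : ι) :
    ∀ l : List ι, (∀ x ∈ l, A a * A x = -(A x * A a)) →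
      A a * (l.map A).prod = (-1 : ℤ) ^ l.length • ((l.map A).prod * A a) := by
  intro l
  induction l with
  | nil => simp
  | cons x t ih =>
    intro hl
    have hx := hl x (by simp)
    have ht : ∀ y ∈ t, A a * A y = -(A y * A a) := fun y hy => hl y (by simp [hy])
    simp only [List.map_cons, List.prod_cons, List.length_cons]
    rw [← mul_assoc, hx, neg_mul, mul_assoc, ih ht, mul_smul_comm, ← mul_assoc,
      ← smul_neg, ← smul_mul_assoc]
    rw [pow_succ, mul_comm ((-1:ℤ)^t.length), mul_smul, neg_one_zsmul]
    simp [mul_assoc]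

lemma mul_listProd_erase (a : ι) :
    ∀ l : List ι, l.Nodup → (∀ x ∈ l, x ≠ a → A a * A x = -(A x * A a)) →
      A a * (l.map A).prod = (-1 : ℤ) ^ (l.erase a).length • ((l.map A).prod * A a) := by
  intro l
  induction l with
  | nil => simp
  | cons x t ih =>
    intro hnd hl
    have hnd' : t.Nodup := (List.nodup_cons.mp hnd).2
    by_cases hxa : x = a
    · subst hxa
      have hxt : x ∉ t := (List.nodup_cons.mp hnd).1
      have ht : ∀ y ∈ t, A x * A y = -(A y * A x) := fun y hy =>
        hl y (by simp [hy]) (fun e => hxt (e ▸ hy))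
      have h2 := mul_listProd A x t ht
      simp only [List.map_cons, List.prod_cons, List.erase_cons_head]
      calc A x * (A x * (t.map A).prod)
          = A x * ((-1:ℤ)^t.length • ((t.map A).prod * A x)) := by rw [h2]
        _ = (-1:ℤ)^t.length • (A x * (t.map A).prod * A x) := by
            rw [mul_smul_comm, mul_assoc]
    · have hl' : ∀ y ∈ t, y ≠ a → A a * A y = -(A y * A a) := fun y hy hya =>
        hl y (by simp [hy]) hya
      have hxaa : A a * A x = -(A x * A a) := hl x (by simp) hxa
      have herase : (x :: t).erase a = x :: t.erase a := by
        rw [List.erase_cons_tail]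
        simp [hxa]
      simp only [List.map_cons, List.prod_cons, herase, List.length_cons]
      rw [← mul_assoc, hxaa, neg_mul, mul_assoc, ih hnd' hl', mul_smul_comm, ← smul_neg,
        pow_succ, mul_comm ((-1:ℤ)^(t.erase a).length), mul_smul, neg_one_zsmul]
      simp [mul_assoc]

end ListProd

lemma linearIndependent_of_signs {F M ι κ : Type*} [Field F] [AddCommGroup M] [Module F M]
    [DecidableEq ι]
    (h2 : (2:F) ≠ 0) (v : ι → M) (hv : ∀ i, v i ≠ 0)
    (c : κ → M →ₗ[F] M) (ε : κ → ι → F)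
    (hεpm : ∀ k i, ε k i = 1 ∨ ε k i = -1)
    (hc : ∀ k i, c k (v i) = ε k i • v i)
    (hsep : ∀ i i', i ≠ i' → ∃ k, ε k i ≠ ε k i') :
    LinearIndependent F v := by
  rw [linearIndependent_iff']
  intro s
  induction s using Finset.strongInduction with
  | _ s ih =>
    intro g hg i hi
    have key : ∀ j ∈ s, j ≠ i → g j = 0 := by
      intro j hj hji
      obtain ⟨k, hk⟩ := hsep i j (Ne.symm hji)
      have h1 : ∑ a ∈ s, (ε k a * g a) • v a = 0 := by
        have h0 := congrArg (c k) hg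
        rw [map_sum, map_zero] at h0
        rw [← h0]
        refine Finset.sum_congr rfl fun a _ => ?_
        rw [map_smul, hc, smul_smul, mul_comm]
      have hB2 : ∑ a ∈ s, (ε k i * g a) • v a = 0 := by
        have : ∑ a ∈ s, (ε k i * g a) • v a = ε k i • ∑ a ∈ s, g a • v a := by
          rw [Finset.smul_sum]
          exact Finset.sum_congr rfl fun a _ => by rw [smul_smul]
        rw [this, hg, smul_zero]
      have h3 : ∑ a ∈ s, ((ε k i - ε k a) * g a) • v a = 0 := by
        have : ∀ a ∈ s, ((ε k i - ε k a) * g a) • v a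
            = (ε k i * g a) • v a - (ε k a * g a) • v a := by
          intro a _; rw [← sub_smul, sub_mul]
        rw [Finset.sum_congr rfl this, Finset.sum_sub_distrib, hB2, h1, sub_zero]
      have h4 : ∑ a ∈ s.erase i, ((ε k i - ε k a) * g a) • v a = 0 := by
        rw [Finset.sum_erase _ (by simp)]
        exact h3
      have h5 := ih (s.erase i) (Finset.erase_ssubset hi) _ h4 j
        (Finset.mem_erase.mpr ⟨hji, hj⟩)
      have h6 : ε k i - ε k j ≠ 0 := by
        rcases hεpm k i with h | h <;> rcases hεpm k j with h' | h' <;> rw [h, h'] at hk ⊢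
        · exact absurd rfl hk
        · intro hcon; apply h2; linear_combination hcon
        · intro hcon; apply h2; linear_combination -hcon
        · exact absurd rfl hk
      rcases mul_eq_zero.mp h5 with h | h
      · exact absurd h h6
      · exact h
    have hsingle : g i • v i = 0 := by
      rw [← hg]
      symm
      apply Finset.sum_eq_single_of_mem i hi
      intro j hj hji
      rw [key j hj hji, zero_smul]
    rcases smul_eq_zero.mp hsingle with h | h
    · exact h
    · exact absurd h (hv i)

lemma exists_erase_card_parity {γ : Type*} [Fintype γ] [DecidableEq γ]
    {S T : Finset γ} (hne : S ≠ T)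
    (hpar : S.card % 2 = T.card % 2 ∨ Sᶜ ≠ T) :
    ∃ j : γ, ((S.erase j).card) % 2 ≠ ((T.erase j).card) % 2 := by
  by_cases hp : S.card % 2 = T.card % 2
  · have hex : ∃ j, (j ∈ S ∧ j ∉ T) ∨ (j ∈ T ∧ j ∉ S) := by
      by_contra hco
      push_neg at hco
      apply hne
      ext j
      have := hco j
      tauto
    obtain ⟨j, hj⟩ := hex
    refine ⟨j, ?_⟩
    rcases hj with ⟨hjs, hjt⟩ | ⟨hjt, hjs⟩
    · rw [Finset.card_erase_of_mem hjs, Finset.erase_eq_of_notMem hjt]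
      have h1 : 1 ≤ S.card := Finset.card_pos.mpr ⟨j, hjs⟩
      omega
    · rw [Finset.card_erase_of_mem hjt, Finset.erase_eq_of_notMem hjs]
      have h1 : 1 ≤ T.card := Finset.card_pos.mpr ⟨j, hjt⟩
      omega
  · have hs := hpar.resolve_left hp
    by_cases hj : ∃ j, (j ∈ S ↔ j ∈ T)
    · obtain ⟨j, hj⟩ := hj
      refine ⟨j, ?_⟩
      by_cases hjs : j ∈ S
      · have hjt := hj.mp hjs
        rw [Finset.card_erase_of_mem hjs, Finset.card_erase_of_mem hjt]
        have h1 : 1 ≤ S.card := Finset.card_pos.mpr ⟨j, hjs⟩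
        have h1' : 1 ≤ T.card := Finset.card_pos.mpr ⟨j, hjt⟩
        omega
      · have hjt : j ∉ T := fun ht => hjs (hj.mpr ht)
        rw [Finset.erase_eq_of_notMem hjs, Finset.erase_eq_of_notMem hjt]
        omega
    · push_neg at hj
      exfalso
      have hT : T = Sᶜ := by
        ext a
        simp only [Finset.mem_compl]
        have := hj a
        tauto
      exact hs hT.symm

section Hurwitz

open Module

lemma sq_lt_two_pow (k : ℕ) (h8 : 8 ≤ k) : (k+2)*(k+2) < 2^k := by
  induction k, h8 using Nat.le_induction with
  | base => norm_num
  | succ n hn ih =>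
    have h2 : 2^(n+1) = 2 * 2^n := by ring
    have h3 : (n+1+2)*(n+1+2) ≤ 2*((n+2)*(n+2)) := by nlinarith
    omega

theorem hurwitz_dim {F : Type*} [Field F] [IsAlgClosed F] (h2 : (2:F) ≠ 0)
    {S : Type*} [AddCommGroup S] [Module F S] [FiniteDimensional F S]
    (b : LinearMap.BilinForm F S) (hsy : ∀ x y, b x y = b y x)
    (hnd : ∀ x : S, (∀ y, b x y = 0) → x = 0)
    (μ : S →ₗ[F] S →ₗ[F] S)
    (hcomp : ∀ x y, b (μ x y) (μ x y) = b x x * b y y)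
    (hn0 : finrank F S ≠ 0) (hn24 : finrank F S ≤ 24) :
    finrank F S ∈ ({1, 2, 4, 8} : Set ℕ) := by
  by_contra hmem
  -- basic consequences
  have hnd' : ∀ x : S, (∀ y, b y x = 0) → x = 0 := fun x hx =>
    hnd x fun y => (hsy x y).trans (hx y)
  have hcancel : ∀ u v : S, (∀ y, b u y = b v y) → u = v := by
    intro u v huv
    have h0 : u - v = 0 := by
      apply hnd
      intro y
      rw [map_sub, LinearMap.sub_apply, huv y, sub_self]
    rwa [sub_eq_zero] at h0
  haveI : Invertible (2:F) := invertibleOfNonzero h2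
  have hbsymm : LinearMap.IsSymm b := ⟨fun x y => hsy x y⟩
  obtain ⟨m, hm⟩ : ∃ m, finrank F S = m + 1 := ⟨finrank F S - 1, by omega⟩
  obtain ⟨v0, hv0⟩ := LinearMap.BilinForm.exists_orthogonal_basis hbsymm
  let v : Basis (Fin (m+1)) F S := v0.reindex (finCongr hm)
  have hvortho : ∀ i j : Fin (m+1), i ≠ j → b (v i) (v j) = 0 := by
    intro i j hij
    simp only [v, Module.Basis.reindex_apply]
    exact hv0 (fun e => hij ((finCongr hm).symm.injective e))
  have hbasis0 : ∀ (wb : Basis (Fin (m+1)) F S) (z : S), (∀ i, b (wb i) z = 0) → z = 0 := by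
    intro wb z hz
    apply hnd'
    intro y
    rw [← wb.sum_repr y, map_sum, LinearMap.sum_apply]
    refine Finset.sum_eq_zero fun j _ => ?_
    rw [map_smul, LinearMap.smul_apply, hz j, smul_zero]
  have hvne : ∀ i, b (v i) (v i) ≠ 0 := by
    intro i hzero
    refine Basis.ne_zero v i (hnd _ ?_)
    intro y
    rw [← v.sum_repr y, map_sum]
    refine Finset.sum_eq_zero fun j _ => ?_
    rw [map_smul]
    by_cases hij : i = j
    · rw [← hij, hzero, smul_zero]
    · rw [hvortho i j hij, smul_zero]
  have hsq : ∀ i, ∃ s : F, s ≠ 0 ∧ s * s * b (v i) (v i) = 1 := by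
    intro i
    obtain ⟨s, hs⟩ := IsAlgClosed.exists_pow_nat_eq (b (v i) (v i))⁻¹ (n := 2) (by norm_num)
    refine ⟨s, ?_, ?_⟩
    · intro h0
      have hz : (b (v i) (v i))⁻¹ = 0 := by rw [← hs, h0]; norm_num
      exact inv_ne_zero (hvne i) hz
    · rw [← pow_two, hs, inv_mul_cancel₀ (hvne i)]
  choose sc hsc0 hsc1 using hsq
  let w : Basis (Fin (m+1)) F S := v.unitsSMul fun i => Units.mk0 (sc i) (hsc0 i)
  have hwapp : ∀ i, w i = sc i • v i := fun i => Basis.unitsSMul_apply i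
  have hw : ∀ i j, b (w i) (w j) = if i = j then 1 else 0 := by
    intro i j
    simp only [hwapp, map_smul, LinearMap.smul_apply, smul_eq_mul]
    by_cases hij : i = j
    · subst hij
      simp only [if_pos rfl]
      rw [← mul_assoc]
      exact hsc1 i
    · rw [hvortho i j hij]
      simp [hij]
  -- polarization
  have pol1 : ∀ x y u : S, b (μ x u) (μ y u) = b x y * b u u := by
    intro x y u
    have e0 := hcomp (x + y) u
    have e1 := hcomp x u
    have e2 := hcomp y u
    have e3 : b (μ y u) (μ x u) = b (μ x u) (μ y u) := hsy _ _
    have e4 : b y x = b x y := hsy _ _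
    simp only [map_add, LinearMap.add_apply] at e0
    have key : (2:F) * (b (μ x u) (μ y u)) = 2 * (b x y * b u u) := by
      linear_combination e0 - e1 - e2 - e3 + e4 * (b u u)
    exact mul_left_cancel₀ h2 key
  have pol2 : ∀ x y u u' : S,
      b (μ x u) (μ y u') + b (μ x u') (μ y u) = b x y * (b u u' + b u' u) := by
    intro x y u u'
    have e0 := pol1 x y (u + u')
    have e1 := pol1 x y u
    have e2 := pol1 x y u'
    simp only [map_add, LinearMap.add_apply] at e0
    linear_combination e0 - e1 - e2
  have I1 : ∀ (i : Fin (m+1)) (x y : S), b (μ (w i) x) (μ (w i) y) = b x y := by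
    intro i x y
    have e := pol2 (w i) (w i) x y
    have e2 : b (μ (w i) y) (μ (w i) x) = b (μ (w i) x) (μ (w i) y) := hsy _ _
    have e3 : b y x = b x y := hsy _ _
    have e4 : b (w i) (w i) = 1 := by rw [hw]; simp
    have key : (2:F) * b (μ (w i) x) (μ (w i) y) = 2 * b x y := by
      linear_combination e - e2 + e4 * (b x y + b y x) + e3
    exact mul_left_cancel₀ h2 key
  have I2 : ∀ (i j : Fin (m+1)), i ≠ j → ∀ x y : S,
      b (μ (w i) x) (μ (w j) y) = - b (μ (w i) y) (μ (w j) x) := by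
    intro i j hij x y
    have e := pol2 (w i) (w j) x y
    have e4 : b (w i) (w j) = 0 := by rw [hw]; simp [hij]
    linear_combination e + e4 * (b x y + b y x)
  -- invertibility of right multiplications
  have hBker : ∀ (i : Fin (m+1)) (u : S), μ (w i) u = 0 → u = 0 := by
    intro i u hu
    apply hnd
    intro y
    have hI := I1 i u y
    rw [hu] at hI
    simpa using hI.symm
  have hBbij : ∀ i : Fin (m+1), Function.Bijective (μ (w i)) := by
    intro i
    have hinj : Function.Injective (μ (w i)) := by
      rw [← LinearMap.ker_eq_bot, LinearMap.ker_eq_bot']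
      exact fun u hu => hBker i u hu
    exact ⟨hinj, LinearMap.injective_iff_surjective.mp hinj⟩
  set lst : Fin (m+1) := Fin.last m with hlst
  let Beq : S ≃ₗ[F] S := LinearEquiv.ofBijective _ (hBbij lst)
  have hBlast_inv : ∀ x : S, μ (w lst) (Beq.symm x) = x := by
    intro x
    have h0 := Beq.apply_symm_apply x
    rwa [LinearEquiv.ofBijective_apply] at h0
  let A : Fin m → Module.End F S := fun i => (μ (w i.castSucc)) ∘ₗ (Beq.symm : S →ₗ[F] S)
  have hA_apply : ∀ i x, A i x = μ (w i.castSucc) (Beq.symm x) := fun i x => rfl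
  have hcs_ne : ∀ i : Fin m, (i.castSucc : Fin (m+1)) ≠ lst := fun i =>
    (Fin.castSucc_lt_last i).ne
  have hAskew : ∀ (i : Fin m) (x y : S), b (A i x) y = - b x (A i y) := by
    intro i x y
    calc b (A i x) y = b (μ (w i.castSucc) (Beq.symm x)) (μ (w lst) (Beq.symm y)) := by
          rw [hA_apply, hBlast_inv]
      _ = - b (μ (w i.castSucc) (Beq.symm y)) (μ (w lst) (Beq.symm x)) :=
          I2 _ _ (hcs_ne i) _ _
      _ = - b x (A i y) := by rw [hBlast_inv, ← hA_apply, hsy x (A i y)]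
  have hAiso : ∀ (i : Fin m) (x y : S), b (A i x) (A i y) = b x y := by
    intro i x y
    rw [hA_apply, hA_apply, I1]
    have hI := I1 lst (Beq.symm x) (Beq.symm y)
    rw [hBlast_inv, hBlast_inv] at hI
    exact hI.symm
  have hAsq : ∀ i, A i * A i = -1 := by
    intro i
    apply LinearMap.ext
    intro x
    apply hcancel
    intro y
    calc b ((A i * A i) x) y = b (A i (A i x)) y := rfl
      _ = - b (A i x) (A i y) := hAskew i (A i x) y
      _ = - b x y := by rw [hAiso]
      _ = b (-x) y := by rw [map_neg, LinearMap.neg_apply]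
      _ = b ((-1 : Module.End F S) x) y := rfl
  have hAanti : ∀ i j, i ≠ j → A i * A j = -(A j * A i) := by
    intro i j hij
    apply LinearMap.ext
    intro x
    apply hcancel
    intro y
    have h1 : b (A j x) (A i y) = - b (A j y) (A i x) := by
      rw [hA_apply, hA_apply, hA_apply, hA_apply]
      exact I2 _ _ (fun e => hij (Fin.castSucc_injective m e).symm) _ _
    calc b ((A i * A j) x) y = b (A i (A j x)) y := rfl
      _ = - b (A j x) (A i y) := hAskew i _ y
      _ = b (A j y) (A i x) := by rw [h1, neg_neg]
      _ = b (A i x) (A j y) := hsy _ _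
      _ = - b (A j (A i x)) y := by rw [hAskew j (A i x) y, neg_neg]
      _ = b (-(A j (A i x))) y := by rw [map_neg, LinearMap.neg_apply]
      _ = b ((-(A j * A i)) x) y := rfl
  have hAunit : ∀ i, IsUnit (A i) := by
    intro i
    refine ⟨⟨A i, -(A i), ?_, ?_⟩, rfl⟩
    · rw [mul_neg, hAsq i, neg_neg]
    · rw [neg_mul, hAsq i, neg_neg]
  haveI hStriv : Nontrivial S := Module.nontrivial_of_finrank_pos (R := F) (by omega)
  have hEnd1 : (1 : Module.End F S) ≠ 0 := by
    intro hcon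
    obtain ⟨x, hx⟩ := exists_ne (0 : S)
    apply hx
    calc x = (1 : Module.End F S) x := rfl
      _ = (0 : Module.End F S) x := by rw [hcon]
      _ = 0 := rfl
  haveI : Nontrivial (Module.End F S) := nontrivial_of_ne 1 0 hEnd1
  have hcast_smul : ∀ (e : ℕ) (g : Module.End F S), (-1:ℤ)^e • g = ((-1:F)^e) • g := by
    intro e g
    rw [← Int.cast_smul_eq_zsmul F]
    push_cast
    ring_nf
  -- products over finsets
  let P : Finset (Fin m) → Module.End F S := fun T => ((T.sort (· ≤ ·)).map A).prod
  have hPunit : ∀ T, IsUnit (P T) := by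
    intro T
    apply List.prod_isUnit
    intro x hx
    rcases List.mem_map.mp hx with ⟨i, _, rfl⟩
    exact hAunit i
  have hPne : ∀ T, P T ≠ 0 := fun T => (hPunit T).ne_zero
  have hconj : ∀ (j : Fin m) (T : Finset (Fin m)),
      A j * P T = ((-1:F)^((T.erase j).card)) • (P T * A j) := by
    intro j T
    have hmain := mul_listProd_erase A j (T.sort (· ≤ ·)) (T.sort_nodup _)
      (fun x _ hxj => hAanti j x fun e => hxj e.symm)
    have hlen : ((T.sort (· ≤ ·)).erase j).length = (T.erase j).card := by
      by_cases hj : j ∈ T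
      · have h1 := List.length_erase_add_one
          ((Finset.mem_sort (α := Fin m) (· ≤ ·)).mpr hj)
        have h2 := Finset.length_sort (α := Fin m) (· ≤ ·) (s := T)
        have h3 := Finset.card_erase_of_mem hj
        have h4 : 1 ≤ T.card := Finset.card_pos.mpr ⟨j, hj⟩
        omega
      · rw [List.erase_of_not_mem fun hc => hj ((Finset.mem_sort (α := Fin m) (· ≤ ·)).mp hc),
          Finset.length_sort, Finset.erase_eq_of_notMem hj]
    rw [hlen] at hmain
    rw [show ((T.sort (· ≤ ·)).map A).prod = P T from rfl] at hmain
    rw [hmain, hcast_smul]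
  -- conjugation operators
  let cj : Fin m → Module.End F S →ₗ[F] Module.End F S := fun j =>
    -((LinearMap.mulRight F (A j)).comp (LinearMap.mulLeft F (A j)))
  have hcj : ∀ (j : Fin m) (T : Finset (Fin m)),
      cj j (P T) = ((-1:F)^((T.erase j).card)) • P T := by
    intro j T
    have : cj j (P T) = -(A j * P T * A j) := rfl
    rw [this, hconj j T, smul_mul_assoc, mul_assoc, hAsq j, mul_neg_one, smul_neg, neg_neg]
  have hpm : ∀ e : ℕ, (-1:F)^e = 1 ∨ (-1:F)^e = -1 := by
    intro e
    rcases Nat.even_or_odd e with he | he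
    · left; exact he.neg_one_pow
    · right; exact he.neg_one_pow
  have hpow_ne : ∀ e e' : ℕ, e % 2 ≠ e' % 2 → (-1:F)^e ≠ (-1:F)^e' := by
    intro e e' hee
    rcases Nat.even_or_odd e with he | he <;> rcases Nat.even_or_odd e' with he' | he'
    · exfalso; rw [Nat.even_iff] at he he'; omega
    · rw [he.neg_one_pow, he'.neg_one_pow]
      intro hcon; exact h2 (by linear_combination hcon)
    · rw [he.neg_one_pow, he'.neg_one_pow]
      intro hcon; exact h2 (by linear_combination -hcon)
    · exfalso; rw [Nat.odd_iff] at he he'; omega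
  -- generic independence of sign-separated families of products
  have hindep : ∀ (ι' : Type) (_ : Fintype ι') (_ : DecidableEq ι') (fam : ι' → Finset (Fin m)),
      Function.Injective fam →
      (∀ a a', a ≠ a' →
        (fam a).card % 2 = (fam a').card % 2 ∨ (fam a)ᶜ ≠ fam a') →
      LinearIndependent F fun a => P (fam a) := by
    intro ι' _ _ fam hfinj hfpar
    apply linearIndependent_of_signs h2 _ (fun a => hPne (fam a)) cj
      (fun j a => (-1:F)^(((fam a).erase j).card))
      (fun j a => hpm _) (fun j a => hcj j (fam a))
    intro a a' haa
    obtain ⟨j, hj⟩ := exists_erase_card_parity (fun e => haa (hfinj e)) (hfpar a a' haa)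
    exact ⟨j, hpow_ne _ _ hj⟩
  -- the three impossible cases
  have hcases : (3 ≤ finrank F S ∧ finrank F S % 2 = 1) ∨ finrank F S = 6 ∨
      (10 ≤ finrank F S ∧ finrank F S % 2 = 0) := by
    simp only [Set.mem_insert_iff, Set.mem_singleton_iff] at hmem
    omega
  rcases hcases with ⟨hn3, hodd⟩ | h6 | ⟨hn10, heven⟩
  · -- odd case : determinant argument
    have hm2 : 2 ≤ m := by omega
    let i0 : Fin m := ⟨0, by omega⟩
    let i1 : Fin m := ⟨1, by omega⟩
    have hne01 : i0 ≠ i1 := by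
      intro hcon
      have := congrArg Fin.val hcon
      simp [i0, i1] at this
    have hoddn : Odd (finrank F S) := Nat.odd_iff.mpr hodd
    have hdetneg1 : LinearMap.det (-1 : Module.End F S) = (-1:F)^(finrank F S) := by
      have hneg1 : (-1 : Module.End F S) = (-1 : F) • (1 : Module.End F S) := by
        rw [neg_one_smul]
      rw [hneg1, LinearMap.det_smul, map_one, mul_one]
    have hdetne : ∀ i, LinearMap.det (A i) ≠ 0 := by
      intro i
      have hd : LinearMap.det (A i) * LinearMap.det (A i) = (-1:F)^(finrank F S) := by
        rw [← map_mul LinearMap.det (A i) (A i), hAsq i, hdetneg1]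
      intro hcon
      rw [hcon, mul_zero] at hd
      exact pow_ne_zero _ (neg_ne_zero.mpr one_ne_zero) hd.symm
    have hdeq : LinearMap.det (A i0) * LinearMap.det (A i1)
        = - (LinearMap.det (A i1) * LinearMap.det (A i0)) := by
      rw [← map_mul LinearMap.det, ← map_mul LinearMap.det, hAanti i0 i1 hne01]
      have hneg : (-(A i1 * A i0)) = (-1 : F) • (A i1 * A i0) := by rw [neg_one_smul]
      rw [hneg, LinearMap.det_smul, hoddn.neg_one_pow]
      ring
    have h2z : (2:F) * (LinearMap.det (A i0) * LinearMap.det (A i1)) = 0 := by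
      linear_combination hdeq
    rcases mul_eq_zero.mp h2z with hcon | hcon
    · exact h2 hcon
    · exact mul_ne_zero (hdetne i0) (hdetne i1) hcon
  · -- n = 6 : skew-symmetric count
    have hm5 : m = 5 := by omega
    subst hm5
    -- skew submodule
    let K : Submodule F (Module.End F S) :=
      { carrier := {f | ∀ x y, b (f x) y = - b x (f y)}
        add_mem' := by
          intro f g hf hg x y
          simp only [LinearMap.add_apply, map_add, LinearMap.add_apply, hf x y, hg x y]
          ring
        zero_mem' := by intro x y; simp
        smul_mem' := by
          intro c f hf x y
          simp only [LinearMap.smul_apply, map_smul, LinearMap.smul_apply, hf x y,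
            smul_eq_mul]
          ring }
    have hmemK : ∀ f : Module.End F S, f ∈ K ↔ ∀ x y, b (f x) y = - b x (f y) :=
      fun f => Iff.rfl
    -- products of sorted lists are skew for card 1, 2, 5
    have hskewlist : ∀ l : List (Fin 5), l.Nodup →
        ∀ x y, b (((l.map A).prod) x) y = (-1:F)^(triNum l.length) * b x (((l.map A).prod) y) := by
      intro l
      induction l with
      | nil => intro _ x y; simp [triNum]
      | cons i t ih =>
        intro hnd0 x y
        have hnd' : t.Nodup := (List.nodup_cons.mp hnd0).2
        have hit : i ∉ t := (List.nodup_cons.mp hnd0).1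
        have hmove := mul_listProd A i t (fun z hz => hAanti i z fun e => hit (e ▸ hz))
        have hmove' : (t.map A).prod * A i = ((-1:F)^t.length) • (A i * (t.map A).prod) := by
          rw [hcast_smul] at hmove
          rw [hmove, smul_smul, ← pow_add]
          have : ((-1:F)^(t.length + t.length)) = 1 := by
            rw [← two_mul, pow_mul]
            norm_num
          rw [this, one_smul]
        simp only [List.map_cons, List.prod_cons, List.length_cons]
        rw [Module.End.mul_apply, hAskew i _ y, ih hnd' x (A i y)]
        have happ : (t.map A).prod (A i y) = ((t.map A).prod * A i) y := rfl
        rw [happ, hmove']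
        rw [LinearMap.smul_apply, map_smul, smul_eq_mul]
        have hexp : triNum (t.length + 1) = triNum t.length + (t.length + 1) := rfl
        rw [hexp, pow_add, pow_succ]
        ring
    have hPK : ∀ T : Finset (Fin 5), T.card = 1 ∨ T.card = 2 ∨ T.card = 5 → P T ∈ K := by
      intro T hT
      rw [hmemK]
      intro x y
      have hl := hskewlist (T.sort (· ≤ ·)) (T.sort_nodup _) x y
      rw [Finset.length_sort] at hl
      have hodd : (-1:F)^(triNum T.card) = -1 := by
        rcases hT with h | h | h <;> rw [h] <;> norm_num [triNum]
      rw [show ((T.sort (· ≤ ·)).map A).prod = P T from rfl] at hl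
      rw [hl, hodd]
      ring
    -- the sixteen element family
    let ι6 : Type := {T : Finset (Fin 5) // T.card = 1 ∨ T.card = 2 ∨ T.card = 5}
    have hind6 : LinearIndependent F fun a : ι6 => P a.1 := by
      refine hindep ι6 inferInstance inferInstance Subtype.val Subtype.val_injective ?_
      intro a a' _
      rcases a.2 with h1 | h1 | h1 <;> rcases a'.2 with h1' | h1' | h1' <;>
        [skip; right; left; right; left; right; left; right; skip] <;>
        first
          | omega
          | (intro hcon
             have := congrArg Finset.card hcon
             rw [Finset.card_compl, Fintype.card_fin] at this
             omega)
    have hcard6 : Fintype.card ι6 = 16 := by decide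
    have hspan16 : finrank F (Submodule.span F (Set.range fun a : ι6 => P a.1)) = 16 := by
      rw [finrank_span_eq_card hind6, hcard6]
    have hsub : Submodule.span F (Set.range fun a : ι6 => P a.1) ≤ K := by
      rw [Submodule.span_le]
      rintro _ ⟨a, rfl⟩
      exact hPK a.1 a.2
    have h16 : 16 ≤ finrank F K := by
      rw [← hspan16]
      exact Submodule.finrank_mono hsub
    -- injection of K into strictly-upper-triangular entries
    have hm6 : finrank F S = 6 := h6
    let pairs := {p : Fin 6 × Fin 6 // p.1 < p.2}
    let Ψ : K →ₗ[F] (pairs → F) :=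
      { toFun := fun f p => b (w p.1.1) (f.1 (w p.1.2))
        map_add' := by
          intro f g
          funext p
          simp [Submodule.coe_add, LinearMap.add_apply, map_add]
        map_smul' := by
          intro c f
          funext p
          simp [Submodule.coe_smul, LinearMap.smul_apply, map_smul] }
    have hΨinj : Function.Injective Ψ := by
      rw [← LinearMap.ker_eq_bot, LinearMap.ker_eq_bot']
      intro f hf
      have hfsk : ∀ x y, b (f.1 x) y = - b x (f.1 y) := f.2
      have hupper : ∀ p : pairs, b (w p.1.1) (f.1 (w p.1.2)) = 0 := by
        intro p
        have := congrFun hf p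
        simpa [Ψ] using this
      have hdiag : ∀ i : Fin 6, b (w i) (f.1 (w i)) = 0 := by
        intro i
        have e1 := hfsk (w i) (w i)
        have e2 := hsy (f.1 (w i)) (w i)
        have h2x : (2:F) * b (w i) (f.1 (w i)) = 0 := by linear_combination e1 - e2
        rcases mul_eq_zero.mp h2x with hc | hc
        · exact absurd hc h2
        · exact hc
      have hentries : ∀ i j : Fin 6, b (w i) (f.1 (w j)) = 0 := by
        intro i j
        rcases lt_trichotomy i j with hij | hij | hij
        · exact hupper ⟨(i, j), hij⟩
        · rw [hij]; exact hdiag j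
        · have e1 := hupper ⟨(j, i), hij⟩
          have e2 := hfsk (w j) (w i)
          have e3 := hsy (w i) (f.1 (w j))
          linear_combination e3 + e2 - e1
      have hfw : ∀ j : Fin 6, f.1 (w j) = 0 := by
        intro j
        exact hbasis0 w _ (fun i => hentries i j)
      apply Subtype.ext
      apply LinearMap.ext
      intro x
      rw [← w.sum_repr x, map_sum]
      simp only [map_smul, hfw, smul_zero]
      simp
    have hKle : finrank F K ≤ finrank F (pairs → F) :=
      LinearMap.finrank_le_finrank_of_injective hΨinj
    have hpairs : finrank F (pairs → F) = 15 := by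
      rw [Module.finrank_pi F]
      decide
    omega
  · -- even case, n ≥ 10 : counting argument
    obtain ⟨k, hk⟩ : ∃ k, m = k + 1 := ⟨m - 1, by omega⟩
    subst hk
    let emb : Fin k ↪ Fin (k+1) := ⟨Fin.castSucc, Fin.castSucc_injective k⟩
    let fam : Finset (Fin k) → Finset (Fin (k+1)) := fun T => T.map emb
    have hlastnot : ∀ T : Finset (Fin k), Fin.last k ∉ fam T := by
      intro T hcon
      rcases Finset.mem_map.mp hcon with ⟨x, _, hx⟩
      exact (Fin.castSucc_lt_last x).ne hx
    have hfaminj : Function.Injective fam := fun T T' hTT =>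
      Finset.map_injective emb hTT
    have hindE := hindep (Finset (Fin k)) inferInstance inferInstance fam hfaminj ?hpar
    case hpar =>
      intro a a' _
      right
      intro hcon
      have h1 : Fin.last k ∈ (fam a)ᶜ := Finset.mem_compl.mpr (hlastnot a)
      rw [hcon] at h1
      exact hlastnot a' h1
    have hcount := hindE.fintype_card_le_finrank
    rw [Fintype.card_finset, Fintype.card_fin, Module.finrank_linearMap] at hcount
    have hnk : finrank F S = k + 2 := by omega
    rw [hnk] at hcount
    have hk8 : 8 ≤ k := by omega
    exact absurd hcount (not_le.mpr (sq_lt_two_pow k hk8))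
end Hurwitz

section CCAux

variable {F : Type*} [Field F] {L : Type*} [CommRing L] [Algebra F L]
  {V : Type*} [AddCommGroup V] (C : CyclicComp F L V)

lemma CyclicComp.smul_zero' (x : V) : C.smul 0 x = 0 := by
  have h := C.add_smul 0 0 x
  rw [add_zero] at h
  exact left_eq_add.mp h

lemma CyclicComp.smul_neg_one (x : V) : C.smul (-1) x = -x := by
  have h := C.add_smul 1 (-1) x
  rw [add_neg_cancel, C.smul_zero', C.one_smul] at h
  exact (neg_eq_of_add_eq_zero_right h.symm).symm

lemma CyclicComp.Q_neg (x : V) : C.Q (-x) = C.Q x := by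
  rw [← C.smul_neg_one, C.Q_smul, neg_one_sq, one_mul]

lemma CyclicComp.bQ_symm (x y : V) : C.bQ x y = C.bQ y x := by
  rw [C.bQ_def, C.bQ_def, add_comm]
  ring

lemma CyclicComp.bQ_neg_left (x y : V) : C.bQ (-x) y = - C.bQ x y := by
  rw [← C.smul_neg_one, C.bQ_smul_left, neg_one_mul]

lemma CyclicComp.bQ_add_left (hc2 : ∀ a b : L, a + a = b + b → a = b) (x x' y : V) :
    C.bQ (x + x') y = C.bQ x y + C.bQ x' y := by
  have hdef : ∀ u v : V, C.Q (u + v) = C.Q u + C.Q v + C.bQ u v := by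
    intro u v; rw [C.bQ_def]; ring
  apply hc2
  have h1 : C.Q (x + x' + y) = C.Q (x + x') + C.Q y + C.bQ (x + x') y := hdef _ _
  have h2 : C.Q (x + x' + y) = C.Q x' + C.Q (x + y) + C.bQ x' (x + y) := by
    rw [show x + x' + y = x' + (x + y) by abel]
    exact hdef x' (x + y)
  have h3 : C.Q (-(x + x') + y) = C.Q (x + x') + C.Q y - C.bQ (x + x') y := by
    have h := hdef (-(x + x')) y
    rw [C.Q_neg, C.bQ_neg_left] at h
    rw [h]; ring
  have h4 : C.Q (-(x + x') + y) = C.Q x + C.Q (-x' + y) - C.bQ x (-x' + y) := by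
    have h := hdef (-x) (-x' + y)
    rw [C.Q_neg, C.bQ_neg_left] at h
    rw [show -(x + x') + y = -x + (-x' + y) by abel, h]; ring
  have h5 : C.Q (-x' + y) = C.Q x' + C.Q y - C.bQ x' y := by
    have h := hdef (-x') y
    rw [C.Q_neg, C.bQ_neg_left] at h
    rw [h]; ring
  have h6 : C.bQ x (-x' + y) = C.Q (x + (-x' + y)) - C.Q x - C.Q (-x' + y) := C.bQ_def _ _
  have h7 : C.Q (x + (-x' + y)) = C.Q x' + C.Q (x + y) - C.bQ x' (x + y) := by
    have h := hdef (-x') (x + y)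
    rw [C.Q_neg, C.bQ_neg_left] at h
    rw [show x + (-x' + y) = -x' + (x + y) by abel, h]; ring
  have h8 : C.bQ x y = C.Q (x + y) - C.Q x - C.Q y := C.bQ_def x y
  linear_combination - h1 + h2 + h3 - h4 + h6 + h7 - 2 * h5 - 2 * h8

lemma CyclicComp.bQ_add_right (hc2 : ∀ a b : L, a + a = b + b → a = b) (x y y' : V) :
    C.bQ x (y + y') = C.bQ x y + C.bQ x y' := by
  rw [C.bQ_symm, C.bQ_add_left hc2, C.bQ_symm y x, C.bQ_symm y' x]

lemma CyclicComp.bQ_zero_left (y : V) : C.bQ 0 y = 0 := by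
  have h : C.bQ (C.smul 0 0) y = 0 * C.bQ 0 y := C.bQ_smul_left 0 0 y
  rw [C.smul_zero', zero_mul] at h
  exact h

lemma CyclicComp.bQ_zero_right (x : V) : C.bQ x 0 = 0 := by
  rw [C.bQ_symm, C.bQ_zero_left]

lemma CyclicComp.bQ_self (x : V) : C.bQ x x = C.Q x + C.Q x := by
  have h2L : C.smul ((1:L) + 1) x = x + x := by rw [C.add_smul, C.one_smul]
  have h := C.bQ_def x x
  rw [show x + x = C.smul ((1:L)+1) x from h2L.symm, C.Q_smul] at h
  rw [h]; ring

end CCAux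

/-- For a Type III grading by an abelian group `G` on the cyclic
composition algebra `(V, L, ρ, *, Q)` of rank 8 (here `L = F×F×F`,
`dim_F V = 24`, the grading on `L` has one-dimensional components with `ξ =
(1,ω,ω²)` of degree `h` of order 3, the product and `b_Q` are degree-preserving)
with `V_e ≠ 0`: the identity component `V_e` is a subalgebra of `(V,*)` on which
`Q` takes values in `F·1`, `(V_e, *, Q|_{V_e})` is a symmetric composition algebra
over `F`, and hence `dim_F V_e ∈ {1, 2, 4, 8}`. -/
theorem typeIII_identity_component_symmetric_composition
    {F V G : Type*} [Field F] [IsAlgClosed F]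
    (h2 : ringChar F ≠ 2) (h3 : ringChar F ≠ 3)
    [AddCommGroup V] [Module F V] [CommGroup G] [DecidableEq G]
    (C : CyclicComp F (F × F × F) V)
    (hρ : C.ρ = cyclicShift F)
    (hFs : ∀ (c : F) (v : V), C.smul (algebraMap F (F × F × F) c) v = c • v)
    (hrank : Module.finrank F V = 24)
    (W : G → Submodule F V) (hint : DirectSum.IsInternal W)
    (ω : F) (hω1 : ω ≠ 1) (hω3 : ω ^ 3 = 1)
    (h : G) (hh1 : h ≠ 1) (hh3 : h ^ 3 = 1)
    (hξ : ∀ (a : G) (x : V), x ∈ W a →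
      C.smul ((1 : F), ω, ω ^ 2) x ∈ W (h * a))
    (hmulg : ∀ (a b : G) (x y : V), x ∈ W a → y ∈ W b → C.mul x y ∈ W (a * b))
    (hbQg : ∀ (a b : G) (x y : V), x ∈ W a → y ∈ W b →
      ∃ (k : ℕ) (c : F), C.bQ x y = c • ((1 : F), ω, ω ^ 2) ^ k ∧
        (C.bQ x y ≠ 0 → h ^ k = a * b))
    (hVe : W 1 ≠ ⊥) :
    (∀ x y : V, x ∈ W 1 → y ∈ W 1 → C.mul x y ∈ W 1) ∧
      (∀ x : V, x ∈ W 1 → ∃ c : F, C.Q x = algebraMap F (F × F × F) c) ∧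
      (∀ x y : V, x ∈ W 1 → y ∈ W 1 → C.Q (C.mul x y) = C.Q x * C.Q y) ∧
      (∀ x y z : V, x ∈ W 1 → y ∈ W 1 → z ∈ W 1 →
        C.bQ (C.mul x y) z = C.bQ x (C.mul y z)) ∧
      (∀ x : V, x ∈ W 1 → (∀ y : V, y ∈ W 1 → C.bQ x y = 0) → x = 0) ∧
      Module.finrank F (W 1) ∈ ({1, 2, 4, 8} : Set ℕ) := by
    classical
  -- characteristic facts
  have h2F : (2:F) ≠ 0 := by
    intro hcon
    haveI := ringChar.charP F
    have hdvd : ringChar F ∣ 2 := (CharP.cast_eq_zero_iff F (ringChar F) 2).mp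
      (by exact_mod_cast hcon)
    rcases (Nat.dvd_prime Nat.prime_two).mp hdvd with h1 | h1
    · have hone : ((1:ℕ):F) = 0 := (CharP.cast_eq_zero_iff F (ringChar F) 1).mpr
        (by rw [h1])
      simp at hone
    · exact h2 h1
  have hfc : ∀ s t : F, s + s = t + t → s = t := by
    intro s t hst
    have h' : (2:F) * s = 2 * t := by linear_combination hst
    exact mul_left_cancel₀ h2F h'
  have hc2 : ∀ a b : F × F × F, a + a = b + b → a = b := by
    intro a b hab
    have e1 := congrArg (fun p : F × F × F => p.1) hab
    have e2 := congrArg (fun p : F × F × F => p.2.1) hab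
    have e3 := congrArg (fun p : F × F × F => p.2.2) hab
    simp only [Prod.fst_add, Prod.snd_add] at e1 e2 e3
    exact Prod.ext (hfc _ _ e1) (Prod.ext (hfc _ _ e2) (hfc _ _ e3))
  -- order of h
  have horder : orderOf h = 3 := by
    have hdvd : orderOf h ∣ 3 := orderOf_dvd_of_pow_eq_one hh3
    rcases (Nat.dvd_prime (by norm_num : Nat.Prime 3)).mp hdvd with h1 | h1
    · exact absurd (orderOf_eq_one_iff.mp h1) hh1
    · exact h1
  have hpowmod : ∀ k : ℕ, h ^ k = h ^ (k % 3) := by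
    intro k
    conv_lhs => rw [← Nat.div_add_mod k 3]
    rw [pow_add, pow_mul, hh3, one_pow, one_mul]
  have hcube : h * (h * h) = 1 := by
    rw [← hh3, pow_succ, pow_two, mul_assoc]
  -- ξ facts
  set ξ : F × F × F := ((1:F), ω, ω ^ 2) with hξdef
  have hξ3 : ξ ^ 3 = 1 := by
    have hcu : ξ ^ 3 = ξ * ξ * ξ := by rw [pow_succ, pow_two]
    rw [hcu, hξdef, Prod.mk_mul_mk, Prod.mk_mul_mk, Prod.mk_mul_mk, Prod.mk_mul_mk]
    refine Prod.ext ?_ (Prod.ext ?_ ?_)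
    · simp
    · show ω * ω * ω = 1
      linear_combination hω3
    · show ω ^ 2 * ω ^ 2 * ω ^ 2 = 1
      linear_combination (ω ^ 3 + 1) * hω3
  have hρfix : ∀ c : F, C.ρ (algebraMap F (F × F × F) c) = algebraMap F (F × F × F) c :=
    fun c => C.ρ.commutes c
  -- scalar values of bQ on matching degrees
  have hsc : ∀ (a b : G) (x y : V), x ∈ W a → y ∈ W b → a * b = 1 →
      ∃ c : F, C.bQ x y = algebraMap F (F × F × F) c := by
    intro a bb x y hx hy hab
    obtain ⟨k, c, hbc, hne⟩ := hbQg a bb x y hx hy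
    by_cases h0 : C.bQ x y = 0
    · exact ⟨0, by rw [h0, map_zero]⟩
    · have hk : h ^ k = 1 := by rw [hne h0, hab]
      have hdvd : 3 ∣ k := by rw [← horder]; exact orderOf_dvd_of_pow_eq_one hk
      obtain ⟨t, rfl⟩ := hdvd
      refine ⟨c, ?_⟩
      rw [hbc, pow_mul, hξ3, one_pow, Algebra.algebraMap_eq_smul_one]
  -- conjunct 1 : closure
  have hmul1 : ∀ x y : V, x ∈ W 1 → y ∈ W 1 → C.mul x y ∈ W 1 := by
    intro x y hx hy
    have hmm := hmulg 1 1 x y hx hy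
    rwa [one_mul] at hmm
  -- conjunct 2 : Q is scalar on W 1
  have hQsc : ∀ x : V, x ∈ W 1 → ∃ c : F, C.Q x = algebraMap F (F × F × F) c := by
    intro x hx
    obtain ⟨c, hcq⟩ := hsc 1 1 x x hx hx (one_mul 1)
    refine ⟨c / 2, ?_⟩
    apply hc2
    rw [← map_add]
    have hself := C.bQ_self x
    rw [hcq] at hself
    rw [← hself]
    congr 1
    field_simp
    ring
  -- conjunct 3 : multiplicativity of Q on W 1
  have hQmul : ∀ x y : V, x ∈ W 1 → y ∈ W 1 → C.Q (C.mul x y) = C.Q x * C.Q y := by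
    intro x y hx hy
    obtain ⟨cx, hcx⟩ := hQsc x hx
    obtain ⟨cy, hcy⟩ := hQsc y hy
    rw [C.comp, hcx, hcy, hρfix, hρfix, hρfix]
  -- conjunct 4 : associativity of the form
  have hassoc : ∀ x y z : V, x ∈ W 1 → y ∈ W 1 → z ∈ W 1 →
      C.bQ (C.mul x y) z = C.bQ x (C.mul y z) := by
    intro x y z hx hy hz
    obtain ⟨c, hcb⟩ := hsc 1 1 (C.mul y z) x (hmul1 y z hy hz) hx (one_mul 1)
    rw [C.assoc1, hcb, hρfix, ← hcb, C.bQ_symm]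
  -- conjunct 5 : nondegeneracy on W 1
  have hnd1 : ∀ x : V, x ∈ W 1 → (∀ y : V, y ∈ W 1 → C.bQ x y = 0) → x = 0 := by
    intro x hx hby
    apply C.nondeg
    have hξξξ : ξ * ξ * ξ = 1 := by rw [← hξ3]; ring
    have hcomp0 : ∀ (a : G) (y : V), y ∈ W a → C.bQ x y = 0 := by
      intro a y hy
      by_cases h0 : C.bQ x y = 0
      · exact h0
      exfalso
      obtain ⟨k, c, hbc, hne⟩ := hbQg 1 a x y hx hy
      have hk : h ^ k = a := by rw [hne h0, one_mul]
      have hmod : k % 3 = 0 ∨ k % 3 = 1 ∨ k % 3 = 2 := by omega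
      rcases hmod with hm3 | hm3 | hm3
      · have ha : a = 1 := by rw [← hk, hpowmod, hm3, pow_zero]
        rw [ha] at hy
        exact h0 (hby y hy)
      · -- a = h ; multiply twice by ξ
        have ha : a = h := by rw [← hk, hpowmod, hm3, pow_one]
        have hy1 := hξ a y hy
        have hy2 := hξ _ _ hy1
        have hW1 : h * (h * a) = 1 := by rw [ha]; exact hcube
        rw [hW1] at hy2
        have h0' := hby _ hy2
        rw [← C.mul_smul ξ ξ y] at h0'
        have hb : C.bQ x (C.smul (ξ * ξ) y) = ξ * ξ * C.bQ x y := by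
          rw [C.bQ_symm, C.bQ_smul_left, C.bQ_symm y x]
        rw [hb] at h0'
        apply h0
        calc C.bQ x y = ξ * ξ * ξ * C.bQ x y := by rw [hξξξ, one_mul]
          _ = ξ * (ξ * ξ * C.bQ x y) := by ring
          _ = 0 := by rw [h0', mul_zero]
      · -- a = h * h ; multiply once by ξ
        have ha : a = h * h := by rw [← hk, hpowmod, hm3, pow_two]
        have hy1 := hξ a y hy
        have hW1 : h * a = 1 := by rw [ha]; exact hcube
        rw [hW1] at hy1
        have h0' := hby _ hy1
        have hb : C.bQ x (C.smul ξ y) = ξ * C.bQ x y := by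
          rw [C.bQ_symm, C.bQ_smul_left, C.bQ_symm y x]
        rw [hb] at h0'
        apply h0
        calc C.bQ x y = ξ * ξ * ξ * C.bQ x y := by rw [hξξξ, one_mul]
          _ = ξ * ξ * (ξ * C.bQ x y) := by ring
          _ = 0 := by rw [h0', mul_zero]
    intro y
    have hytop : y ∈ ⨆ a, W a := by rw [hint.submodule_iSup_eq_top]; trivial
    refine Submodule.iSup_induction W (motive := fun z => C.bQ x z = 0) hytop
      (fun a y hy => hcomp0 a y hy) (C.bQ_zero_right x) ?_
    intro u v hu hv
    rw [C.bQ_add_right hc2, hu, hv, add_zero]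
  -- conjunct 6 : the dimension
  haveI hfdV : FiniteDimensional F V :=
    Module.finite_of_finrank_pos (by rw [hrank]; norm_num)
  have halgfst : ∀ c : F, (algebraMap F (F × F × F) c).1 = c := fun c => rfl
  have hbQ_smulF : ∀ (c : F) (x y : V),
      C.bQ (c • x) y = algebraMap F (F × F × F) c * C.bQ x y := by
    intro c x y
    rw [← hFs c x, C.bQ_smul_left]
  have hmulF_left : ∀ (c : F) (x y : V), C.mul (c • x) y = c • C.mul x y := by
    intro c x y
    rw [← hFs c x, C.mul_smul_left, hρfix, hFs]
  have hmulF_right : ∀ (c : F) (x y : V), C.mul x (c • y) = c • C.mul x y := by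
    intro c x y
    rw [← hFs c y, C.mul_smul_right, hρfix, hρfix, hFs]
  let S := ↥(W 1)
  let bS : LinearMap.BilinForm F S := LinearMap.mk₂ F (fun x y => (C.bQ x.1 y.1).1)
    (fun x x' y => by
      show (C.bQ ((x:V) + (x':V)) (y:V)).1
        = (C.bQ (x:V) (y:V)).1 + (C.bQ (x':V) (y:V)).1
      rw [C.bQ_add_left hc2, Prod.fst_add])
    (fun cc x y => by
      show (C.bQ (cc • (x:V)) (y:V)).1 = cc * (C.bQ (x:V) (y:V)).1
      rw [hbQ_smulF, Prod.fst_mul, halgfst])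
    (fun x y y' => by
      show (C.bQ (x:V) ((y:V) + (y':V))).1
        = (C.bQ (x:V) (y:V)).1 + (C.bQ (x:V) (y':V)).1
      rw [C.bQ_add_right hc2, Prod.fst_add])
    (fun cc x y => by
      show (C.bQ (x:V) (cc • (y:V))).1 = cc * (C.bQ (x:V) (y:V)).1
      rw [C.bQ_symm, hbQ_smulF, Prod.fst_mul, halgfst, C.bQ_symm (y:V) (x:V)])
  let μS : S →ₗ[F] S →ₗ[F] S := LinearMap.mk₂ F
    (fun x y => (⟨C.mul x.1 y.1, hmul1 x.1 y.1 x.2 y.2⟩ : S))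
    (fun x x' y => Subtype.ext (C.mul_add_left x.1 x'.1 y.1))
    (fun cc x y => Subtype.ext (hmulF_left cc x.1 y.1))
    (fun x y y' => Subtype.ext (C.mul_add_right x.1 y.1 y'.1))
    (fun cc x y => Subtype.ext (hmulF_right cc x.1 y.1))
  obtain ⟨sq2, hsq2⟩ := IsAlgClosed.exists_pow_nat_eq (2:F) (n := 2) (by norm_num)
  let μ' : S →ₗ[F] S →ₗ[F] S := sq2 • μS
  have hsyS : ∀ x y : S, bS x y = bS y x := by
    intro x y
    show (C.bQ x.1 y.1).1 = (C.bQ y.1 x.1).1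
    rw [C.bQ_symm]
  have hndS : ∀ x : S, (∀ y : S, bS x y = 0) → x = 0 := by
    intro x hxy
    have hx0 : (x : V) = 0 := by
      apply hnd1 x.1 x.2
      intro y hy
      obtain ⟨c, hcb⟩ := hsc 1 1 x.1 y x.2 hy (one_mul 1)
      have hzz := hxy ⟨y, hy⟩
      have hzz' : (C.bQ x.1 y).1 = 0 := hzz
      rw [hcb, halgfst] at hzz'
      rw [hcb, hzz', map_zero]
    exact Subtype.ext hx0
  have hmk2 : ∀ x y : S, (μ' x y : V) = sq2 • C.mul x.1 y.1 := fun x y => rfl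
  have hbSv : ∀ x y : S, bS x y = (C.bQ x.1 y.1).1 := fun x y => rfl
  have hcompS : ∀ x y : S, bS (μ' x y) (μ' x y) = bS x x * bS y y := by
    intro x y
    have e1 : ∀ u : S, bS u u = (C.Q u.1).1 + (C.Q u.1).1 := by
      intro u
      rw [hbSv, C.bQ_self, Prod.fst_add]
    rw [e1, e1, e1]
    have e2 : C.Q ((μ' x y : S) : V) = algebraMap F (F × F × F) (sq2 ^ 2) *
        C.Q (C.mul x.1 y.1) := by
      rw [hmk2, ← hFs, C.Q_smul, ← map_pow]
    rw [e2, hQmul x.1 y.1 x.2 y.2, Prod.fst_mul, Prod.fst_mul, halgfst]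
    linear_combination (2 * (C.Q x.1).1 * (C.Q y.1).1) * hsq2
  have hfin1 : finrank F S ≠ 0 := by
    have hnt : Nontrivial S := Submodule.nontrivial_iff_ne_bot.mpr hVe
    have hpos : 0 < finrank F S := Module.finrank_pos_iff.mpr hnt
    omega
  have hle24 : finrank F S ≤ 24 := by
    have hsle := Submodule.finrank_le (W 1)
    rw [hrank] at hsle
    exact hsle
  have hdim := hurwitz_dim h2F bS hsyS hndS μ' hcompS hfin1 hle24
  exact ⟨hmul1, hQsc, hQmul, hassoc, hnd1, hdim⟩
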